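/- Let Q be a quiver without oriented cycles and θ a weight such that ∇(Q,θ) is non-empty. Suppose v is a vertex of ∇(Q,θ) such that the graph with vertex set Q₀ and edge set supp(v) = {a ∈ Q₁ : v(a) ≠ 0} is connected (in the undirected sense). Then v is a smooth vertex of ∇(Q,θ), i.e. the ray generators of Cone(∇(Q,θ) − v) form part of a ℤ-basis of the ambient lattice intersected with the span of the cone. -/

import Mathlib

open BigOperators

/-- The quiver polytope `∇(Q,θ)`. -/
def quiverPolytope {Q0 Q1 : Type} [Fintype Q1] [DecidableEq Q0]
    (t h : Q1 → Q0) (θ : Q0 → ℤ) : Set (Q1 → ℝ) :=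
  {x | (∀ a, 0 ≤ x a) ∧ ∀ v, (θ v : ℝ) =
    (∑ a, if h a = v then x a else 0) - ∑ a, if t a = v then x a else 0}

/-- `Q` has an oriented cycle. -/
def HasOrientedCycle {Q0 Q1 : Type} (t h : Q1 → Q0) : Prop :=
  ∃ (m : ℕ) (f : Fin (m + 1) → Q1), ∀ i, h (f i) = t (f (i + 1))

/-- A vertex `v` of a polytope `P ⊆ ℝ^ι` is smooth: the cone of `P` at `v` is
generated by lattice vectors forming a `ℤ`-basis of the lattice points of its span. -/
def IsSmoothVertexOf {ι : Type} [Fintype ι] (P : Set (ι → ℝ)) (v : ι → ℝ) : Prop :=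
  ∃ (r : ℕ) (g : Fin r → ι → ℤ),
    LinearIndependent ℝ (fun j => fun i => ((g j i : ℤ) : ℝ)) ∧
    {y : ι → ℝ | ∃ s : ℝ, 0 ≤ s ∧ ∃ x ∈ P, y = s • (x - v)}
      = {y | ∃ lam : Fin r → ℝ, (∀ j, 0 ≤ lam j) ∧
          y = ∑ j, lam j • fun i => ((g j i : ℤ) : ℝ)} ∧
    ∀ p : ι → ℤ, (fun i => ((p i : ℤ) : ℝ)) ∈
        Submodule.span ℝ (Set.range fun j => fun i => ((g j i : ℤ) : ℝ)) →
      ∃ z : Fin r → ℤ, p = ∑ j, z j • g j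


section
variable {Q0 Q1 : Type} [Fintype Q1] [DecidableEq Q0] (tt hh : Q1 → Q0)

/-- divergence -/
def qdiv {M : Type} [AddCommGroup M] (x : Q1 → M) (u : Q0) : M :=
  (∑ a, if hh a = u then x a else 0) - ∑ a, if tt a = u then x a else 0

lemma qdiv_add {M : Type} [AddCommGroup M] (x y : Q1 → M) (u : Q0) :
    qdiv tt hh (fun a => x a + y a) u = qdiv tt hh x u + qdiv tt hh y u := by
  unfold qdiv
  have h1 : ∀ f : Q1 → Q0, (∑ a, if f a = u then x a + y a else 0)
      = (∑ a, if f a = u then x a else 0) + ∑ a, if f a = u then y a else 0 := by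
    intro f
    rw [← Finset.sum_add_distrib]
    exact Finset.sum_congr rfl fun a _ => by split <;> simp
  rw [h1, h1]; abel

lemma qdiv_sub {M : Type} [AddCommGroup M] (x y : Q1 → M) (u : Q0) :
    qdiv tt hh (fun a => x a - y a) u = qdiv tt hh x u - qdiv tt hh y u := by
  unfold qdiv
  have h1 : ∀ f : Q1 → Q0, (∑ a, if f a = u then x a - y a else 0)
      = (∑ a, if f a = u then x a else 0) - ∑ a, if f a = u then y a else 0 := by
    intro f
    rw [← Finset.sum_sub_distrib]
    exact Finset.sum_congr rfl fun a _ => by split <;> simp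
  rw [h1, h1]; abel

lemma qdiv_smul (c : ℝ) (x : Q1 → ℝ) (u : Q0) :
    qdiv tt hh (fun a => c * x a) u = c * qdiv tt hh x u := by
  unfold qdiv
  rw [mul_sub]
  congr 1 <;>
  · rw [Finset.mul_sum]
    exact Finset.sum_congr rfl fun a _ => by split <;> simp

lemma qdiv_sum {M : Type} [AddCommGroup M] {κ : Type} [Fintype κ] (f : κ → Q1 → M) (u : Q0) :
    qdiv tt hh (fun b => ∑ j, f j b) u = ∑ j, qdiv tt hh (f j) u := by
  unfold qdiv
  have h1 : ∀ g : Q1 → Q0, (∑ a, if g a = u then (∑ j, f j a) else 0)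
      = ∑ j, ∑ a, if g a = u then f j a else 0 := by
    intro g
    rw [Finset.sum_comm]
    exact Finset.sum_congr rfl fun a _ => by split <;> simp
  rw [h1, h1, ← Finset.sum_sub_distrib]

lemma qdiv_single {M : Type} [AddCommGroup M] [DecidableEq Q1] (a₀ : Q1) (m : M) (u : Q0) :
    qdiv tt hh (fun b => if b = a₀ then m else 0) u
      = (if hh a₀ = u then m else 0) - (if tt a₀ = u then m else 0) := by
  unfold qdiv
  have key : ∀ g : Q1 → Q0, (∑ a, if g a = u then (if a = a₀ then m else 0) else 0)
      = if g a₀ = u then m else 0 := by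
    intro g
    rw [Finset.sum_eq_single a₀ (fun b _ hb => by simp [hb]) (fun hb => by simp at hb)]
    simp
  rw [key, key]

lemma qdiv_intCast (w : Q1 → ℤ) (u : Q0) :
    qdiv tt hh (fun a => ((w a : ℤ) : ℝ)) u = ((qdiv tt hh w u : ℤ) : ℝ) := by
  unfold qdiv
  push_cast
  refine congrArg₂ (· - ·) ?_ ?_ <;> exact Finset.sum_congr rfl fun a _ => by split <;> simp

end

section
variable {Q0 Q1 : Type} [Fintype Q1] [DecidableEq Q0] (tt hh : Q1 → Q0)

/-- From an undirected walk in the support of `v`, build an integer flow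
supported on the support of `v` with divergence `δ_q - δ_p`. -/
lemma exists_path_flow [DecidableEq Q1] (v : Q1 → ℝ) {p q : Q0}
    (hpq : Relation.ReflTransGen (fun p q => ∃ a : Q1, v a ≠ 0 ∧
      ((tt a = p ∧ hh a = q) ∨ (tt a = q ∧ hh a = p))) p q) :
    ∃ w : Q1 → ℤ, (∀ b, w b ≠ 0 → v b ≠ 0) ∧
      ∀ u, qdiv tt hh w u = (if q = u then 1 else 0) - (if p = u then 1 else 0) := by
  induction hpq with
  | refl => exact ⟨0, fun b hb => absurd rfl hb, fun u => by simp [qdiv]⟩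
  | @tail b c hbc hstep ih =>
    obtain ⟨w, hw1, hw2⟩ := ih
    obtain ⟨a₀, ha₀, hor⟩ := hstep
    rcases hor with ⟨hta, hha⟩ | ⟨hta, hha⟩
    · refine ⟨fun b => w b + (if b = a₀ then 1 else 0), ?_, ?_⟩
      · intro b hb
        by_cases hb0 : b = a₀
        · rwa [hb0]
        · apply hw1; simpa [hb0] using hb
      · intro u
        rw [qdiv_add, hw2, qdiv_single, hha, hta]
        by_cases h1 : b = u <;> by_cases h2 : c = u <;> by_cases h3 : p = u <;>
          simp [h1, h2, h3]
    · refine ⟨fun b => w b + (if b = a₀ then -1 else 0), ?_, ?_⟩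
      · intro b hb
        by_cases hb0 : b = a₀
        · rwa [hb0]
        · apply hw1; simpa [hb0] using hb
      · intro u
        rw [qdiv_add, hw2, qdiv_single, hha, hta]
        by_cases h1 : b = u <;> by_cases h2 : c = u <;> by_cases h3 : p = u <;>
          simp [h1, h2, h3]

/-- A uniform positive `ε` making `ε * |y a| ≤ v a` on the support of `v`. -/
lemma exists_eps (v y : Q1 → ℝ) (hv : ∀ a, v a ≠ 0 → 0 < v a) :
    ∃ ε : ℝ, 0 < ε ∧ ∀ a, v a ≠ 0 → ε * |y a| ≤ v a := by
  classical
  by_cases hne : Nonempty Q1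
  · set c : Q1 → ℝ := fun a => if v a ≠ 0 ∧ y a ≠ 0 then v a / |y a| else 1 with hc
    have hcpos : ∀ a, 0 < c a := by
      intro a
      by_cases hca : v a ≠ 0 ∧ y a ≠ 0
      · simp only [hc, if_pos hca]
        exact div_pos (hv a hca.1) (abs_pos.mpr hca.2)
      · simp [hc, hca]
    obtain ⟨a₀, -, hmin⟩ := Finset.exists_min_image Finset.univ c ⟨Classical.arbitrary Q1,
      Finset.mem_univ _⟩
    refine ⟨c a₀, hcpos a₀, fun a ha => ?_⟩
    by_cases hy : y a = 0
    · simp [hy]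
      exact (hv a ha).le
    · have h1 : c a₀ ≤ c a := hmin a (Finset.mem_univ a)
      have h2 : c a = v a / |y a| := by simp [hc, ha, hy]
      have h3 : 0 < |y a| := abs_pos.mpr hy
      calc c a₀ * |y a| ≤ (v a / |y a|) * |y a| := by
            apply mul_le_mul_of_nonneg_right _ h3.le
            rw [← h2]; exact h1
        _ = v a := by field_simp
  · exact ⟨1, one_pos, fun a => absurd ⟨a⟩ hne⟩

end

lemma mem_quiverPolytope_iff {Q0 Q1 : Type} [Fintype Q1] [DecidableEq Q0]
    (tt hh : Q1 → Q0) (θ : Q0 → ℤ) (x : Q1 → ℝ) :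
    x ∈ quiverPolytope tt hh θ ↔ (∀ a, 0 ≤ x a) ∧ ∀ u, (θ u : ℝ) = qdiv tt hh x u :=
  Iff.rfl

lemma circulation_eq_zero {Q0 Q1 : Type} [Fintype Q1] [DecidableEq Q0]
    (tt hh : Q1 → Q0) (θ : Q0 → ℤ) (v : Q1 → ℝ)
    (hvert : v ∈ Set.extremePoints ℝ (quiverPolytope tt hh θ))
    (w : Q1 → ℝ) (hsupp : ∀ b, w b ≠ 0 → v b ≠ 0) (hdiv : ∀ u, qdiv tt hh w u = 0) :
    w = 0 := by
  classical
  by_contra hw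
  obtain ⟨a₀, ha₀⟩ := Function.ne_iff.mp hw
  have hvm := hvert.1
  have hv0 : ∀ a, 0 ≤ v a := hvm.1
  have hvd : ∀ u, (θ u : ℝ) = qdiv tt hh v u := hvm.2
  have hvpos : ∀ a, v a ≠ 0 → 0 < v a := fun a ha => lt_of_le_of_ne (hv0 a) (Ne.symm ha)
  obtain ⟨ε, hε, hεle⟩ := exists_eps v w hvpos
  have hmem : ∀ σ : ℝ, σ = 1 ∨ σ = -1 →
      (fun a => v a + σ * (ε * w a)) ∈ quiverPolytope tt hh θ := by
    intro σ hσ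
    rw [mem_quiverPolytope_iff]
    constructor
    · intro a
      by_cases hwa : w a = 0
      · simpa [hwa] using hv0 a
      · have h1 := hεle a (hsupp a hwa)
        have h2 : -|w a| ≤ w a := neg_abs_le _
        have h3 : w a ≤ |w a| := le_abs_self _
        rcases hσ with rfl | rfl <;> nlinarith
    · intro u
      have e1 : qdiv tt hh (fun a => v a + σ * (ε * w a)) u
          = qdiv tt hh v u + σ * (ε * qdiv tt hh w u) := by
        rw [qdiv_add tt hh v (fun a => σ * (ε * w a)), qdiv_smul, qdiv_smul]
      rw [e1, hdiv, hvd u]; ring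
  have hx₁ := hmem 1 (Or.inl rfl)
  have hx₂ := hmem (-1) (Or.inr rfl)
  have hseg : v ∈ openSegment ℝ (fun a => v a + 1 * (ε * w a))
      (fun a => v a + (-1) * (ε * w a)) := by
    refine ⟨1/2, 1/2, by norm_num, by norm_num, by norm_num, ?_⟩
    funext a
    simp only [Pi.add_apply, Pi.smul_apply, smul_eq_mul]
    ring
  have heq := hvert.2 hx₁ hx₂ hseg
  have := congrFun heq a₀
  simp only [one_mul] at this
  have : ε * w a₀ = 0 := by linarith [this]
  rcases mul_eq_zero.mp this with h | h
  · exact absurd h (ne_of_gt hε)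
  · exact ha₀ h

/-- a vertex of a quiver polytope whose support is connected as an
undirected subgraph is a smooth vertex. -/
theorem smooth_of_connected_support
    (Q0 Q1 : Type) [Fintype Q0] [Fintype Q1] [DecidableEq Q0] [Nonempty Q0]
    (t h : Q1 → Q0) (hacyc : ¬ HasOrientedCycle t h)
    (θ : Q0 → ℤ) (hnon : (quiverPolytope t h θ).Nonempty)
    (v : Q1 → ℝ)
    (hvert : v ∈ Set.extremePoints ℝ (quiverPolytope t h θ))
    (hconn : ∀ p q : Q0, Relation.ReflTransGen
      (fun p q => ∃ a : Q1, v a ≠ 0 ∧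
        ((t a = p ∧ h a = q) ∨ (t a = q ∧ h a = p))) p q) :
    IsSmoothVertexOf (quiverPolytope t h θ) v := by
  classical
  have hvP : v ∈ quiverPolytope t h θ := hvert.1
  have hv0 : ∀ a, 0 ≤ v a := hvP.1
  have hvd : ∀ u, (θ u : ℝ) = qdiv t h v u := hvP.2
  have hvpos : ∀ a, v a ≠ 0 → 0 < v a := fun a ha => lt_of_le_of_ne (hv0 a) (Ne.symm ha)
  have key : ∀ a : Q1, ∃ w : Q1 → ℤ, (∀ b, w b ≠ 0 → v b ≠ 0) ∧
      ∀ u, qdiv t h w u = (if t a = u then 1 else 0) - (if h a = u then 1 else 0) :=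
    fun a => exists_path_flow t h v (hconn (h a) (t a))
  choose W hW1 hW2 using key
  let ι := {a : Q1 // v a = 0}
  let G : ι → Q1 → ℤ := fun a b => (if b = a.1 then 1 else 0) + W a.1 b
  let Gr : ι → Q1 → ℝ := fun a b => ((G a b : ℤ) : ℝ)
  have hWself : ∀ a : ι, W a.1 a.1 = 0 := by
    intro a
    by_contra hne
    exact (hW1 a.1 a.1 hne) a.2
  have hG_self : ∀ a : ι, G a a.1 = 1 := by
    intro a; simp [G, hWself a]
  have hG_off : ∀ (a : ι) (b : Q1), v b = 0 → b ≠ a.1 → G a b = 0 := by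
    intro a b hb hba
    have hwb : W a.1 b = 0 := by
      by_contra hne
      exact (hW1 a.1 b hne) hb
    simp [G, hba, hwb]
  have hGdiv : ∀ (a : ι) (u : Q0), qdiv t h (G a) u = 0 := by
    intro a u
    have hrw : G a = fun b => (fun b => if b = a.1 then (1 : ℤ) else 0) b + W a.1 b := rfl
    rw [hrw, qdiv_add, qdiv_single, hW2]
    ring
  have hGrdiv : ∀ (a : ι) (u : Q0), qdiv t h (Gr a) u = 0 := by
    intro a u
    have hrw : Gr a = fun b => ((G a b : ℤ) : ℝ) := rfl
    rw [hrw, qdiv_intCast, hGdiv a u, Int.cast_zero]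
  -- decomposition of circulations
  have hdecomp : ∀ x : Q1 → ℝ, (∀ u, qdiv t h x u = 0) →
      x = fun b => ∑ a : ι, x a.1 * Gr a b := by
    intro x hx
    have hsupp : ∀ b, (x b - ∑ a : ι, x a.1 * Gr a b) ≠ 0 → v b ≠ 0 := by
      intro b hb
      by_contra hvb0
      apply hb
      have hsum : ∑ a : ι, x a.1 * Gr a b = x b := by
        rw [Finset.sum_eq_single (⟨b, hvb0⟩ : ι)]
        · have : G ⟨b, hvb0⟩ b = 1 := hG_self ⟨b, hvb0⟩
          simp [Gr, this]
        · intro a _ hab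
          have hne : b ≠ a.1 := by
            intro hba
            exact hab (Subtype.ext hba.symm)
          have : G a b = 0 := hG_off a b hvb0 hne
          simp [Gr, this]
        · intro habs; exact absurd (Finset.mem_univ _) habs
      rw [hsum]; ring
    have hdiv : ∀ u, qdiv t h (fun b => x b - ∑ a : ι, x a.1 * Gr a b) u = 0 := by
      intro u
      rw [qdiv_sub, hx, qdiv_sum]
      rw [Finset.sum_eq_zero (fun a _ => by rw [qdiv_smul, hGrdiv a u, mul_zero])]
      ring
    have hz := circulation_eq_zero t h θ v hvert _ hsupp hdiv
    funext b
    have := congrFun hz b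
    simpa [sub_eq_zero] using this
  let e : Fin (Fintype.card ι) ≃ ι := (Fintype.equivFin ι).symm
  -- evaluation of generator sums at zero coordinates
  have hsum_eval : ∀ (c : Fin (Fintype.card ι) → ℝ) (b : Q1) (hb : v b = 0),
      (∑ j, c j * ((G (e j) b : ℤ) : ℝ)) = c (e.symm ⟨b, hb⟩) := by
    intro c b hb
    rw [Finset.sum_eq_single (e.symm ⟨b, hb⟩)]
    · rw [show e (e.symm ⟨b, hb⟩) = ⟨b, hb⟩ from e.apply_symm_apply _]
      have : G ⟨b, hb⟩ b = 1 := hG_self ⟨b, hb⟩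
      simp [this]
    · intro j _ hj
      have hne : b ≠ (e j).1 := by
        intro hbe
        apply hj
        rw [show (⟨b, hb⟩ : ι) = e j from Subtype.ext hbe, Equiv.symm_apply_apply]
      rw [hG_off (e j) b hb hne]
      simp
    · intro habs; exact absurd (Finset.mem_univ _) habs
  refine ⟨Fintype.card ι, fun j => G (e j), ?_, ?_, ?_⟩
  · -- linear independence
    rw [Fintype.linearIndependent_iff]
    intro c hc j
    have hb := congrFun hc (e j).1
    rw [Finset.sum_apply] at hb
    simp only [Pi.smul_apply, smul_eq_mul, Pi.zero_apply] at hb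
    rw [hsum_eval c (e j).1 (e j).2, Equiv.symm_apply_apply] at hb
    exact hb
  · -- cone equality
    ext y
    constructor
    · rintro ⟨s, hs, x, hxP, rfl⟩
      have hx0 : ∀ a, 0 ≤ x a := hxP.1
      have hxd : ∀ u, (θ u : ℝ) = qdiv t h x u := hxP.2
      have hcirc : ∀ u, qdiv t h (fun b => x b - v b) u = 0 := by
        intro u
        rw [qdiv_sub, ← hxd u, ← hvd u]
        ring
      have hxv := hdecomp (fun b => x b - v b) hcirc
      refine ⟨fun j => s * x (e j).1, fun j => mul_nonneg hs (hx0 _), ?_⟩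
      funext b
      have h1 : x b - v b = ∑ a : ι, (x a.1 - v a.1) * Gr a b := congrFun hxv b
      have h2 : ∀ a : ι, (x a.1 - v a.1) * Gr a b = x a.1 * Gr a b := by
        intro a
        rw [a.2]
        ring
      rw [Finset.sum_congr rfl (fun a _ => h2 a)] at h1
      have h3 : (∑ a : ι, x a.1 * Gr a b) = ∑ j, x (e j).1 * Gr (e j) b :=
        (Equiv.sum_comp e (fun a => x a.1 * Gr a b)).symm
      simp only [Pi.smul_apply, Pi.sub_apply, smul_eq_mul, Finset.sum_apply]
      rw [h1, h3, Finset.mul_sum]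
      exact Finset.sum_congr rfl fun j _ => by ring
    · rintro ⟨lam, hlam, rfl⟩
      set y : Q1 → ℝ := ∑ j, lam j • (fun i => ((G (e j) i : ℤ) : ℝ)) with hy
      have hyb : ∀ b, y b = ∑ j, lam j * ((G (e j) b : ℤ) : ℝ) := by
        intro b
        rw [hy, Finset.sum_apply]
        exact Finset.sum_congr rfl fun j _ => rfl
      have hydiv : ∀ u, qdiv t h y u = 0 := by
        intro u
        have hrw : y = fun b => ∑ j, lam j * ((G (e j) b : ℤ) : ℝ) := funext hyb
        rw [hrw, qdiv_sum]
        exact Finset.sum_eq_zero fun j _ => by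
          rw [qdiv_smul]
          have : (fun b => ((G (e j) b : ℤ) : ℝ)) = Gr (e j) := rfl
          rw [this, hGrdiv, mul_zero]
      obtain ⟨ε, hε, hεle⟩ := exists_eps v y hvpos
      refine ⟨1/ε, by positivity, fun a => v a + ε * y a, ⟨?_, ?_⟩, ?_⟩
      · intro a
        show 0 ≤ v a + ε * y a
        by_cases hva : v a = 0
        · have : y a = lam (e.symm ⟨a, hva⟩) := by
            rw [hyb a]
            exact hsum_eval lam a hva
          rw [hva, this]
          have h3 := hlam (e.symm ⟨a, hva⟩)
          nlinarith
        · have h1 := hεle a hva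
          have h2 := hvpos a hva
          nlinarith [neg_abs_le (y a), le_abs_self (y a)]
      · intro u
        show (θ u : ℝ) = qdiv t h (fun a => v a + ε * y a) u
        have e1 : qdiv t h (fun a => v a + ε * y a) u
            = qdiv t h v u + ε * qdiv t h y u := by
          rw [qdiv_add t h v (fun a => ε * y a), qdiv_smul]
        rw [e1, hydiv u, ← hvd u]
        ring
      · funext a
        simp only [Pi.smul_apply, Pi.sub_apply, smul_eq_mul]
        field_simp
        ring
  · -- integrality
    intro p hp
    rw [Submodule.mem_span_range_iff_exists_fun] at hp
    obtain ⟨c, hc⟩ := hp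
    have hcj : ∀ j, c j = ((p (e j).1 : ℤ) : ℝ) := by
      intro j
      have hb := congrFun hc (e j).1
      rw [Finset.sum_apply] at hb
      simp only [Pi.smul_apply, smul_eq_mul] at hb
      rw [hsum_eval c (e j).1 (e j).2, Equiv.symm_apply_apply] at hb
      exact hb
    refine ⟨fun j => p (e j).1, ?_⟩
    funext b
    have hcb := congrFun hc b
    rw [Finset.sum_apply] at hcb
    simp only [Pi.smul_apply, smul_eq_mul] at hcb
    have hR : (((∑ j, p ((e j).1) • G (e j)) b : ℤ) : ℝ) = ((p b : ℤ) : ℝ) := by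
      rw [← hcb, Finset.sum_apply]
      push_cast [Pi.smul_apply]
      exact Finset.sum_congr rfl fun j _ => by rw [hcj j, smul_eq_mul]; push_cast; ring
    exact (Int.cast_injective hR).symm
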